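/- For all natural numbers n ≥ 1 and k ≥ 1, and real (or commutative ring) variables x_1,...,x_k, the multivariate Abel identity holds: (x_1 + ... + x_k) · (n + x_1 + ... + x_k)^{n-1} = Σ_{i_1 + ... + i_k = n} (n choose i_1,...,i_k) · Π_{j=1}^{k} x_j · (x_j + i_j)^{i_j - 1}, where the sum is over all tuples of nonnegative integers (i_1,...,i_k) summing to n. -/

import Mathlib

open Finset

/-- Abel polynomial `A n x = x * (x + n)^(n-1)`, with `A 0 x = 1`. -/
noncomputable def abelA : ℕ → ℝ → ℝ
  | 0, _ => 1
  | (m+1), x => x * (x + (m+1 : ℕ)) ^ m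

lemma abelA_zero (x : ℝ) : abelA 0 x = 1 := rfl

lemma abelA_succ (m : ℕ) (x : ℝ) : abelA (m+1) x = x * (x + (m+1 : ℕ)) ^ m := rfl

lemma abelA_apply_zero (n : ℕ) : abelA n 0 = if n = 0 then 1 else 0 := by
  cases n with
  | zero => rfl
  | succ m => simp [abelA_succ]

lemma hasDerivAt_abelA (n : ℕ) (x : ℝ) :
    HasDerivAt (abelA n) ((n : ℝ) * abelA (n - 1) (x + 1)) x := by
  cases n with
  | zero =>
    exact (hasDerivAt_const x (1 : ℝ)).congr_deriv (by simp)
  | succ m =>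
    have h1 : HasDerivAt (fun x : ℝ => x * (x + ((m : ℝ) + 1)) ^ m)
        ((x + ((m : ℝ) + 1)) ^ m + x * ((m : ℝ) * (x + ((m : ℝ) + 1)) ^ (m - 1) * 1)) x := by
      simpa using (hasDerivAt_id x).fun_mul (((hasDerivAt_id x).add_const ((m : ℝ) + 1)).fun_pow m)
    have hfun : (fun x : ℝ => x * (x + ((m : ℝ) + 1)) ^ m) = abelA (m+1) := by
      funext y; simp [abelA_succ]
    rw [hfun] at h1
    refine h1.congr_deriv ?_
    cases m with
    | zero => simp [abelA_zero]
    | succ p =>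
      have : ((p : ℝ) + 1 + 1) = ((p+1+1 : ℕ) : ℝ) := by push_cast; ring
      simp only [abelA_succ, Nat.add_sub_cancel, Nat.succ_sub_one]
      push_cast
      have hpow : (x + ((p : ℝ) + 1 + 1)) ^ (p + 1) =
          (x + ((p : ℝ) + 1 + 1)) * (x + ((p : ℝ) + 1 + 1)) ^ p := by ring
      have : x + 1 + ((p : ℝ) + 1) = x + ((p : ℝ) + 1 + 1) := by ring
      rw [hpow, this]
      ring

/-- Abel's binomial identity: the Abel polynomials are of binomial type. -/
lemma abel_binomial (n : ℕ) (x y : ℝ) :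
    abelA n (x + y) = ∑ i ∈ Finset.range (n+1),
      (n.choose i : ℝ) * abelA i x * abelA (n - i) y := by
  induction n generalizing x with
  | zero => simp [abelA_zero]
  | succ n ih =>
    -- both sides as functions of x; they have the same derivative and agree at 0
    set F : ℝ → ℝ := fun x => abelA (n+1) (x + y) with hF
    set G : ℝ → ℝ := fun x => ∑ i ∈ Finset.range (n+2),
      (((n+1).choose i : ℕ) : ℝ) * abelA i x * abelA (n+1 - i) y with hG
    have hFd : ∀ x : ℝ, HasDerivAt F (((n:ℝ)+1) * abelA n (x + y + 1)) x := by
      intro x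
      have h := (hasDerivAt_abelA (n+1) (x + y)).comp x
        ((hasDerivAt_id x).add_const y)
      refine h.congr_deriv ?_
      simp [Nat.add_sub_cancel, mul_one, add_right_comm]
    have hGd : ∀ x : ℝ, HasDerivAt G
        (∑ i ∈ Finset.range (n+2),
          (((n+1).choose i : ℕ) : ℝ) * ((i : ℝ) * abelA (i-1) (x+1)) * abelA (n+1-i) y) x := by
      intro x
      refine HasDerivAt.fun_sum fun i _ => ?_
      have h := (hasDerivAt_abelA i x).const_mul ((((n+1).choose i : ℕ) : ℝ))
      have h2 := h.mul_const (abelA (n+1-i) y)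
      convert h2 using 2 <;> ring
    have hderiv_eq : ∀ x : ℝ,
        (∑ i ∈ Finset.range (n+2),
          (((n+1).choose i : ℕ) : ℝ) * ((i : ℝ) * abelA (i-1) (x+1)) * abelA (n+1-i) y)
        = ((n:ℝ)+1) * abelA n (x + y + 1) := by
      intro x
      rw [Finset.sum_range_succ']
      simp only [Nat.cast_zero, zero_mul, mul_zero, zero_add, Nat.cast_succ,
        Nat.add_sub_cancel, Nat.succ_sub_succ, Nat.sub_zero, add_zero]
      have hch : ∀ i : ℕ, (((n+1).choose (i+1) : ℕ) : ℝ) * ((i:ℝ)+1)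
          = ((n:ℝ)+1) * ((n.choose i : ℕ) : ℝ) := by
        intro i
        have := Nat.add_one_mul_choose_eq n i
        have h2 : ((n+1) * n.choose i : ℕ) = ((n+1).choose (i+1) * (i+1) : ℕ) := by
          simpa [Nat.succ_eq_add_one] using this
        have := congrArg (fun t : ℕ => (t : ℝ)) h2
        push_cast at this
        linarith [this]
      have := ih (x + 1)
      have hxy : x + y + 1 = (x + 1) + y := by ring
      rw [hxy, this, Finset.mul_sum]
      refine Finset.sum_congr rfl fun i _ => ?_
      have := hch i
      calc (((n+1).choose (i+1) : ℕ) : ℝ) * (((i:ℝ)+1) * abelA i (x+1)) * abelA (n-i) y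
          = ((((n+1).choose (i+1) : ℕ) : ℝ) * ((i:ℝ)+1)) * abelA i (x+1) * abelA (n-i) y := by
            ring
        _ = (((n:ℝ)+1) * ((n.choose i : ℕ) : ℝ)) * abelA i (x+1) * abelA (n-i) y := by rw [this]
        _ = ((n:ℝ)+1) * ((n.choose i : ℕ) : ℝ) * abelA i (x+1) * abelA (n-i) y := by ring
        _ = ((n:ℝ)+1) * (((n.choose i : ℕ) : ℝ) * abelA i (x+1) * abelA (n-i) y) := by ring
    have key : ∀ x : ℝ, F x - G x = F 0 - G 0 := by
      have hdiff : ∀ x : ℝ, HasDerivAt (fun x => F x - G x) 0 x := by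
        intro x
        have := (hFd x).fun_sub (hGd x)
        rw [hderiv_eq x] at this
        simpa using this
      intro x
      exact is_const_of_deriv_eq_zero
        (fun z => (hdiff z).differentiableAt)
        (fun z => (hdiff z).deriv) x 0
    have h0 : F 0 = G 0 := by
      simp only [hF, hG, zero_add]
      rw [Finset.sum_range_succ']
      simp [abelA_apply_zero, abelA_zero]
    have := key x
    rw [h0] at this
    have : F x = G x := by linarith
    simpa [hF, hG] using this

lemma abelA_eq_if (n : ℕ) (x : ℝ) :
    abelA n x = if n = 0 then 1 else x * (x + (n : ℝ)) ^ (n - 1) := by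
  cases n with
  | zero => rfl
  | succ m => simp [abelA_succ]

/-- Multivariate Abel identity over an arbitrary finset. -/
lemma abel_multi_gen {ι : Type*} [DecidableEq ι] (s : Finset ι) (n : ℕ) (x : ι → ℝ) :
    abelA n (∑ j ∈ s, x j) =
      ∑ m ∈ s.piAntidiag n, (Nat.multinomial s m : ℝ) * ∏ j ∈ s, abelA (m j) (x j) := by
  induction s using Finset.cons_induction generalizing n with
  | empty =>
    cases n with
    | zero => simp [abelA_zero]
    | succ m => simp [abelA_apply_zero, abelA_succ]
  | cons i t hi ih =>
    rw [Finset.sum_cons, abel_binomial, Finset.piAntidiag_cons hi n, Finset.sum_disjiUnion]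
    rw [Finset.Nat.sum_antidiagonal_eq_sum_range_succ_mk] at *
    refine Finset.sum_congr rfl fun a ha => ?_
    rw [Finset.sum_map, ih (n - a), Finset.mul_sum]
    refine Finset.sum_congr rfl fun m hm => ?_
    simp only [Finset.mem_piAntidiag] at hm
    obtain ⟨hsum, hsupp⟩ := hm
    have hmi : m i = 0 := by
      by_contra h
      exact hi (hsupp i h)
    have hval : ∀ j, (addRightEmbedding fun t => if t = i then a else 0) m j
        = m j + if j = i then a else 0 := fun j => rfl
    set m' : ι → ℕ := fun j => m j + if j = i then a else 0 with hm'
    have hemb : (addRightEmbedding fun t => if t = i then a else 0) m = m' := rfl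
    have hm'i : m' i = a := by simp [hm', hmi]
    have hm't : ∀ j ∈ t, m' j = m j := by
      intro j hj
      have : j ≠ i := fun h => hi (h ▸ hj)
      simp [hm', this]
    have hsum_t : ∑ j ∈ t, m' j = n - a := by
      rw [Finset.sum_congr rfl hm't, hsum]
    rw [hemb]
    have hmult : Nat.multinomial (Finset.cons i t hi) m' =
        n.choose a * Nat.multinomial t m := by
      rw [Nat.multinomial_cons, hm'i, hsum_t]
      congr 1
      · congr 1
        have hrange : a ∈ Finset.range (n+1) := ha
        have : a ≤ n := Nat.lt_succ_iff.mp (Finset.mem_range.mp hrange)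
        omega
      · exact Nat.multinomial_congr fun j hj => hm't j hj
    have hprod : ∏ j ∈ Finset.cons i t hi, abelA (m' j) (x j)
        = abelA a (x i) * ∏ j ∈ t, abelA (m j) (x j) := by
      rw [Finset.prod_cons, hm'i]
      congr 1
      exact Finset.prod_congr rfl fun j hj => by rw [hm't j hj]
    rw [hmult, hprod]
    push_cast
    ring

theorem abel_multivariate (n k : ℕ) (hn : 1 ≤ n) (hk : 1 ≤ k) (x : Fin k → ℝ) :
    (∑ j, x j) * ((n : ℝ) + ∑ j, x j) ^ (n - 1) =
      ∑ m ∈ Finset.Nat.antidiagonalTuple k n,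
        (Nat.multinomial Finset.univ m : ℝ) *
          ∏ j, (if m j = 0 then 1 else x j * (x j + (m j : ℝ)) ^ (m j - 1)) := by
  have h := abel_multi_gen (Finset.univ : Finset (Fin k)) n x
  rw [Finset.piAntidiag_univ_fin_eq_antidiagonalTuple n k] at h
  have hL : abelA n (∑ j, x j) = (∑ j, x j) * ((n : ℝ) + ∑ j, x j) ^ (n - 1) := by
    rw [abelA_eq_if, if_neg (by omega), add_comm (∑ j, x j) ((n : ℝ))]
  rw [← hL, h]
  refine Finset.sum_congr rfl fun m _ => ?_
  congr 1
  exact Finset.prod_congr rfl fun j _ => abelA_eq_if (m j) (x j)
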